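/- Let K and L be line segments in ℝ² (convex hulls of two points), let λ₁, λ₂ ≥ 0, and let D = λ₁·K + λ₂·L (Minkowski sum of the scaled segments). Then V(K,L)·vol(D) = 2·V(K,D)·V(L,D); that is, equality is attained in the isomorphic planar Bezout inequality V(K,L)·vol(D) ≤ 2·V(K,D)·V(L,D). -/

import Mathlib

open MeasureTheory Pointwise

/-- The planar mixed volume `V(K,L) = (vol(K+L) − vol K − vol L)/2`. -/
noncomputable def mixedVol2 (K L : Set (EuclideanSpace ℝ (Fin 2))) : ℝ :=
  ((volume (K + L)).toReal - (volume K).toReal - (volume L).toReal) / 2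

namespace BezoutAux

abbrev E2 := EuclideanSpace ℝ (Fin 2)

lemma smul_seg (c : ℝ) (a b : E2) : c • segment ℝ a b = segment ℝ (c • a) (c • b) := by
  simpa using image_segment ℝ (LinearMap.toAffineMap (c • (LinearMap.id : E2 →ₗ[ℝ] E2))) a b

lemma isCompact_seg (a b : E2) : IsCompact (segment ℝ a b) := by
  rw [segment_eq_image]
  exact isCompact_Icc.image (by fun_prop)

lemma vol_translate (x : E2) (s : Set E2) : volume ({x} + s) = volume s := by
  rw [Set.singleton_add]
  exact measure_vadd volume x s

lemma seg_decomp (a b : E2) : segment ℝ a b = {a} + segment ℝ 0 (b - a) := by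
  rw [Set.singleton_add]
  have h := segment_translate_image ℝ a 0 (b - a)
  simp only [add_zero, add_sub_cancel] at h
  rw [← h]

lemma smul_set_add' (c : ℝ) (s t : Set E2) : c • (s + t) = c • s + c • t := by
  have h : ∀ w : Set E2, c • w = (c • (LinearMap.id : E2 →ₗ[ℝ] E2)) '' w := by
    intro w
    rw [← Set.image_smul]
    rfl
  rw [h, h, h, Set.image_add]

lemma seg_add_seg (u : E2) {a b : ℝ} (ha : 0 ≤ a) (hb : 0 ≤ b) :
    segment ℝ 0 (a • u) + segment ℝ 0 (b • u) = segment ℝ 0 ((a + b) • u) := by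
  have hsm : ∀ c : ℝ, segment ℝ 0 (c • u) = c • segment ℝ 0 u := by
    intro c; rw [smul_seg, smul_zero]
  rw [hsm, hsm, hsm, Convex.add_smul (convex_segment 0 u) ha hb]

lemma rearrange2 (x y : E2) (A B : Set E2) :
    ({x} + A) + ({y} + B) = {x + y} + (A + B) := by
  rw [add_add_add_comm, Set.singleton_add_singleton]

lemma vol_sum_seg (u v : E2) {a b : ℝ} (ha : 0 ≤ a) (hb : 0 ≤ b) :
    volume (segment ℝ 0 (a • u) + segment ℝ 0 (b • v))
      = ENNReal.ofReal (a * b) * volume (segment ℝ 0 u + segment ℝ 0 v) := by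
  by_cases hi : LinearIndependent ℝ ![u, v]
  · have hcard : Fintype.card (Fin 2) = Module.finrank ℝ E2 := by
      simp [finrank_euclideanSpace_fin]
    let B : Module.Basis (Fin 2) ℝ E2 := basisOfLinearIndependentOfCardEqFinrank hi hcard
    have hB : ∀ i, B i = ![u, v] i := fun i =>
      congrFun (coe_basisOfLinearIndependentOfCardEqFinrank hi hcard) i
    let T : E2 →ₗ[ℝ] E2 := B.constr ℝ ![a • u, b • v]
    have hTB : ∀ j, T (B j) = ![a, b] j • B j := by
      intro j
      rw [Module.Basis.constr_basis]
      fin_cases j <;> simp [hB]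
    have hTu : T u = a • u := by
      have h0 := hTB 0
      rw [hB 0] at h0
      simpa using h0
    have hTv : T v = b • v := by
      have h1 := hTB 1
      rw [hB 1] at h1
      simpa using h1
    have hdet : LinearMap.det T = a * b := by
      rw [← LinearMap.det_toMatrix B]
      have hM : LinearMap.toMatrix B B T = Matrix.diagonal ![a, b] := by
        ext i j
        rw [LinearMap.toMatrix_apply, hTB, _root_.map_smul, Module.Basis.repr_self,
          Finsupp.smul_apply, Finsupp.single_apply]
        by_cases hij : i = j
        · subst hij; simp
        · simp [Ne.symm hij, Matrix.diagonal_apply_ne _ hij]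
      rw [hM, Matrix.det_diagonal, Fin.prod_univ_two]
      simp
    have himg : T '' (segment ℝ 0 u + segment ℝ 0 v)
        = segment ℝ 0 (a • u) + segment ℝ 0 (b • v) := by
      rw [Set.image_add]
      congr 1
      · simpa [hTu] using image_segment ℝ T.toAffineMap 0 u
      · simpa [hTv] using image_segment ℝ T.toAffineMap 0 v
    rw [← himg, Measure.addHaar_image_linearMap, hdet,
      abs_of_nonneg (mul_nonneg ha hb)]
  · have hspan : Submodule.span ℝ {u, v} ≠ ⊤ := by
      intro h
      apply hi
      rw [linearIndependent_iff_card_eq_finrank_span]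
      have hr : Set.range ![u, v] = {u, v} := by
        ext x
        simp only [Set.mem_range, Fin.exists_fin_two, Matrix.cons_val_zero,
          Matrix.cons_val_one, Matrix.head_cons, Set.mem_insert_iff, Set.mem_singleton_iff]
        tauto
      rw [hr, Set.finrank, h, finrank_top, finrank_euclideanSpace_fin]
      simp
    have hz : ∀ c d : ℝ, volume (segment ℝ 0 (c • u) + segment ℝ 0 (d • v)) = 0 := by
      intro c d
      refine measure_mono_null ?_ (Measure.addHaar_submodule volume _ hspan)
      rintro x ⟨y, hy, z, hz, rfl⟩
      have hu' : u ∈ Submodule.span ℝ ({u, v} : Set E2) :=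
        Submodule.subset_span (by simp)
      have hv' : v ∈ Submodule.span ℝ ({u, v} : Set E2) :=
        Submodule.subset_span (by simp)
      have hy' : y ∈ (Submodule.span ℝ ({u, v} : Set E2) : Set E2) := by
        refine (Submodule.span ℝ ({u, v} : Set E2)).convex.segment_subset
          (Submodule.zero_mem _) (Submodule.smul_mem _ c hu') hy
      have hz' : z ∈ (Submodule.span ℝ ({u, v} : Set E2) : Set E2) := by
        refine (Submodule.span ℝ ({u, v} : Set E2)).convex.segment_subset
          (Submodule.zero_mem _) (Submodule.smul_mem _ d hv') hz
      exact Submodule.add_mem _ hy' hz'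
    have h11 := hz 1 1
    rw [one_smul, one_smul] at h11
    rw [hz a b, h11, mul_zero]

lemma vol_seg_zero (x y : E2) : volume (segment ℝ x y) = 0 := by
  rw [seg_decomp, vol_translate]
  have hspan : Submodule.span ℝ ({y - x} : Set E2) ≠ ⊤ := by
    refine (span_lt_top_of_card_lt_finrank ?_).ne
    simp [finrank_euclideanSpace_fin]
  refine measure_mono_null ?_ (Measure.addHaar_submodule volume _ hspan)
  refine (Submodule.span ℝ ({y - x} : Set E2)).convex.segment_subset
    (Submodule.zero_mem _) (Submodule.subset_span rfl)

end BezoutAux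

open BezoutAux in
/-- Equality case of Theorem 6.1: if `K` and `L` are segments and
`D = λ₁K + λ₂L`, then `V(K,L)·vol(D) = 2·V(K,D)·V(L,D)`. -/
theorem isomorphic_bezout_plane_equality
    (p q s t : EuclideanSpace ℝ (Fin 2)) (lam₁ lam₂ : ℝ)
    (h₁ : 0 ≤ lam₁) (h₂ : 0 ≤ lam₂)
    (K L D : Set (EuclideanSpace ℝ (Fin 2)))
    (hK : K = segment ℝ p q) (hL : L = segment ℝ s t)
    (hD : D = lam₁ • K + lam₂ • L) :
    mixedVol2 K L * (volume D).toReal = 2 * mixedVol2 K D * mixedVol2 L D := by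
  set u := q - p with hu
  set v := t - s with hv
  set c : ℝ := (volume (segment ℝ 0 u + segment ℝ 0 v)).toReal with hc
  have hfin : volume (segment ℝ 0 u + segment ℝ 0 v) ≠ ⊤ :=
    ((isCompact_seg 0 u).add (isCompact_seg 0 v)).measure_lt_top.ne
  -- key volume formula
  have key : ∀ (x : E2) (a b : ℝ), 0 ≤ a → 0 ≤ b →
      (volume ({x} + (segment ℝ 0 (a • u) + segment ℝ 0 (b • v)))).toReal = a * b * c := by
    intro x a b ha hb
    rw [vol_translate, vol_sum_seg u v ha hb, ENNReal.toReal_mul,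
      ENNReal.toReal_ofReal (mul_nonneg ha hb)]
  -- decompositions
  have hKd : K = {p} + segment ℝ 0 u := by rw [hK, seg_decomp]
  have hLd : L = {s} + segment ℝ 0 v := by rw [hL, seg_decomp]
  have hDd : D = {lam₁ • p + lam₂ • s} + (segment ℝ 0 (lam₁ • u) + segment ℝ 0 (lam₂ • v)) := by
    rw [hD, hKd, hLd, smul_set_add', smul_set_add']
    have e1 : lam₁ • ({p} : Set E2) = {lam₁ • p} := Set.smul_set_singleton
    have e2 : lam₂ • ({s} : Set E2) = {lam₂ • s} := Set.smul_set_singleton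
    have e3 : lam₁ • segment ℝ 0 u = segment ℝ 0 (lam₁ • u) := by rw [smul_seg, smul_zero]
    have e4 : lam₂ • segment ℝ 0 v = segment ℝ 0 (lam₂ • v) := by rw [smul_seg, smul_zero]
    rw [e1, e2, e3, e4, rearrange2]
  -- volumes
  have hvolK : (volume K).toReal = 0 := by rw [hK, vol_seg_zero]; simp
  have hvolL : (volume L).toReal = 0 := by rw [hL, vol_seg_zero]; simp
  have hvolD : (volume D).toReal = lam₁ * lam₂ * c := by
    rw [hDd]; exact key _ _ _ h₁ h₂
  have hvolKL : (volume (K + L)).toReal = c := by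
    have : K + L = {p + s} + (segment ℝ 0 ((1:ℝ) • u) + segment ℝ 0 ((1:ℝ) • v)) := by
      rw [hKd, hLd, one_smul, one_smul, rearrange2]
    rw [this, key _ _ _ zero_le_one zero_le_one, one_mul, one_mul]
  have hvolKD : (volume (K + D)).toReal = (1 + lam₁) * lam₂ * c := by
    have : K + D = {p + (lam₁ • p + lam₂ • s)}
        + (segment ℝ 0 ((1 + lam₁) • u) + segment ℝ 0 (lam₂ • v)) := by
      rw [hKd, hDd, rearrange2, ← add_assoc (segment ℝ 0 u),
        show segment ℝ 0 u = segment ℝ 0 ((1:ℝ) • u) by rw [one_smul],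
        seg_add_seg u zero_le_one h₁]
    rw [this, key _ _ _ (by linarith) h₂]
  have hvolLD : (volume (L + D)).toReal = lam₁ * (1 + lam₂) * c := by
    have : L + D = {s + (lam₁ • p + lam₂ • s)}
        + (segment ℝ 0 (lam₁ • u) + segment ℝ 0 ((1 + lam₂) • v)) := by
      rw [hLd, hDd, rearrange2, add_comm (segment ℝ 0 (lam₁ • u)) (segment ℝ 0 (lam₂ • v)),
        ← add_assoc (segment ℝ 0 v),
        show segment ℝ 0 v = segment ℝ 0 ((1:ℝ) • v) by rw [one_smul],
        seg_add_seg v zero_le_one h₂,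
        add_comm (segment ℝ 0 ((1 + lam₂) • v)) (segment ℝ 0 (lam₁ • u))]
    rw [this, key _ _ _ h₁ (by linarith)]
  unfold mixedVol2
  rw [hvolK, hvolL, hvolD, hvolKL, hvolKD, hvolLD]
  ring
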